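/- Let F be a field, f ∈ F[T], and D_j the j-th hyperdifferential operator on F[T]. For all n ≥ j ≥ 0 and all g ∈ F[T], the polynomial f^{n-j} divides D_j(f^n · g). -/

import Mathlib

/-- f^(n-j) divides D_j(f^n g) for the Hasse–Schmidt derivatives. -/
theorem stmt_5 (F : Type*) [Field F] (f : Polynomial F) (n j : ℕ) (h : j ≤ n)
    (g : Polynomial F) :
    f ^ (n - j) ∣ Polynomial.hasseDeriv j (f ^ n * g) := by
  induction n generalizing j g with
  | zero =>
    interval_cases j
    simp
  | succ n ih =>
    rcases Nat.eq_zero_or_pos j with rfl | hj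
    · simp
    have : f ^ (n + 1) * g = f * (f ^ n * g) := by ring
    rw [this, Polynomial.hasseDeriv_mul]
    apply Finset.dvd_sum
    rintro ⟨k, l⟩ hkl
    rw [Finset.HasAntidiagonal.mem_antidiagonal] at hkl
    rcases Nat.eq_zero_or_pos k with rfl | hk
    · -- term f * D_j (f^n g), l = j
      simp only [Nat.zero_add] at hkl
      subst hkl
      rcases Nat.lt_or_ge l (n + 1) with hl | hl
      · have hln : l ≤ n := Nat.lt_succ_iff.mp hl
        have h2 : f ^ (n + 1 - l) ∣ f * Polynomial.hasseDeriv l (f ^ n * g) := by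
          have : n + 1 - l = (n - l) + 1 := by omega
          rw [this, pow_succ, mul_comm (f ^ (n - l)) f]
          exact mul_dvd_mul_left f (ih l hln g)
        simpa using h2
      · have : n + 1 - l = 0 := by omega
        rw [this, pow_zero]
        exact one_dvd _
    · -- k ≥ 1, so l ≤ j - 1 ≤ n
      have hln : l ≤ n := by omega
      have h1 : f ^ (n - l) ∣ Polynomial.hasseDeriv l (f ^ n * g) := ih l hln g
      have h2 : f ^ (n + 1 - j) ∣ f ^ (n - l) := pow_dvd_pow f (by omega)
      exact Dvd.dvd.mul_left (h2.trans h1) _
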